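/- Let p, q be coprime positive integers, let ε > 0 and a₀ > 0 satisfy 2ε < a₀^{-2} and a₀^{-2} < 1/q − 2ε. Then there exists a constant c > 0 such that for every a > 0 with |a^{-2} − a₀^{-2}| ≤ cε and every (j,k,l) ∈ (ℤ² \ {(0,0)}) × {0,1} with λ_{j,k,l}(a₀) ≠ 0, one has |λ_{j,k,l}(a)| ≥ cε(k² + |j|). -/

import Mathlib

/-- The eigenvalue `λ_{j,k,l}(a) = (pj/q)² − k⁴ + (−1)^l a^{-2} k²`. -/
noncomputable def lam (p q : ℕ) (a : ℝ) (j k : ℤ) (l : Fin 2) : ℝ :=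
  ((p : ℝ) * j / q) ^ 2 - (k : ℝ) ^ 4 + (-1) ^ (l : ℕ) * a⁻¹ ^ 2 * (k : ℝ) ^ 2

lemma key_int (m n : ℤ) (h : m ^ 2 ≠ n ^ 2) : |m| + |n| ≤ |m ^ 2 - n ^ 2| := by
  have e : m ^ 2 - n ^ 2 = (|m| - |n|) * (|m| + |n|) := by
    rw [← sq_abs m, ← sq_abs n]; ring
  have hne : |m| - |n| ≠ 0 := by
    intro h'
    apply h
    have hmn : |m| = |n| := by linarith
    rw [← sq_abs m, ← sq_abs n, hmn]
  have h1 : (1 : ℤ) ≤ |(|m| - |n|)| := Int.one_le_abs hne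
  have h2 : (0 : ℤ) ≤ |m| + |n| := by positivity
  calc |m| + |n| = 1 * (|m| + |n|) := (one_mul _).symm
    _ ≤ |(|m| - |n|)| * (|m| + |n|) := mul_le_mul_of_nonneg_right h1 h2
    _ = |m ^ 2 - n ^ 2| := by rw [e, abs_mul, abs_of_nonneg h2]

set_option maxHeartbeats 1000000 in
theorem stmt2 (p q : ℕ) (hp : 0 < p) (hq : 0 < q) (hpq : Nat.Coprime p q)
    (ε a₀ : ℝ) (hε : 0 < ε) (ha₀ : 0 < a₀)
    (h1 : 2 * ε < a₀⁻¹ ^ 2) (h2 : a₀⁻¹ ^ 2 < 1 / q - 2 * ε) :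
    ∃ c : ℝ, 0 < c ∧ ∀ a : ℝ, 0 < a → |a⁻¹ ^ 2 - a₀⁻¹ ^ 2| ≤ c * ε →
      ∀ (j k : ℤ) (l : Fin 2), (j, k) ≠ (0, 0) → lam p q a₀ j k l ≠ 0 →
        c * ε * ((k : ℝ) ^ 2 + |(j : ℝ)|) ≤ |lam p q a j k l| := by
  have hq1 : (1:ℝ) ≤ (q:ℝ) := by exact_mod_cast hq
  have hqpos : (0:ℝ) < (q:ℝ) := by linarith
  have hqne : (q:ℝ) ≠ 0 := ne_of_gt hqpos
  refine ⟨1 / ((q:ℝ) + 1), by positivity, ?_⟩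
  set c : ℝ := 1 / ((q:ℝ) + 1) with hcdef
  have hcpos : 0 < c := by positivity
  have hc1 : c * ((q:ℝ) + 1) = 1 := by rw [hcdef]; field_simp
  have hcle1 : c ≤ 1 := by nlinarith
  have hε4 : 4 * ε < 1 / (q:ℝ) := by linarith
  have h4εq : 4 * ε * (q:ℝ) < 1 := by
    have := (lt_div_iff₀ hqpos).mp hε4; linarith
  have hcq2 : c * ε * (q:ℝ)^2 ≤ 1 := by
    have hcq' : c * (q:ℝ) ≤ 1 := by nlinarith
    have hεq : ε * (q:ℝ) ≤ 1 := by nlinarith [mul_pos hε hqpos]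
    have hεqnn : (0:ℝ) ≤ ε * (q:ℝ) := by positivity
    nlinarith [mul_le_mul hcq' hεq hεqnn (by linarith : (0:ℝ) ≤ 1)]
  intro a ha haA j k l hjk hlam0
  rw [abs_le] at haA
  have hApos : 0 < a⁻¹ ^ 2 := by positivity
  have hcε : c * ε ≤ ε := by nlinarith
  have hAub : a⁻¹ ^ 2 ≤ 1 / (q:ℝ) - ε := by linarith [haA.1]
  have hAlb : ε < a⁻¹ ^ 2 := by linarith [haA.2]
  have habs_s : |((-1:ℝ)) ^ (l : ℕ)| = 1 := by
    rcases (by fin_cases l <;> simp : ((-1:ℝ)) ^ (l:ℕ) = 1 ∨ ((-1:ℝ)) ^ (l:ℕ) = -1) with h | h <;>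
      rw [h] <;> simp
  set m : ℤ := (p:ℤ) * j with hm
  set n : ℤ := (q:ℤ) * k ^ 2 with hn
  have hDa : ∀ b : ℝ, lam p q b j k l =
      ((m ^ 2 - n ^ 2 : ℤ) : ℝ) / (q:ℝ)^2 + (-1) ^ (l:ℕ) * b⁻¹ ^ 2 * (k:ℝ)^2 := by
    intro b
    unfold lam
    rw [hm, hn]
    push_cast
    field_simp
  have habsA : |(-1:ℝ)^(l:ℕ) * a⁻¹^2 * (k:ℝ)^2| = a⁻¹^2 * (k:ℝ)^2 := by
    rw [abs_mul, abs_mul, habs_s, one_mul, abs_of_pos hApos, abs_of_nonneg (sq_nonneg _)]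
  by_cases hmn : m ^ 2 = n ^ 2
  · -- degenerate case: (pj)² = (qk²)²
    have hkZ : k ≠ 0 := by
      intro hk0
      apply hlam0
      rw [hDa a₀, hmn, hk0]
      simp
    have habsmn : |m| = |n| := by
      have h0 : (m - n) * (m + n) = 0 := by linear_combination hmn
      rcases mul_eq_zero.mp h0 with h' | h'
      · have : m = n := by linarith
        rw [this]
      · have : m = -n := by linarith
        rw [this, abs_neg]
    have hp1 : (1:ℤ) ≤ (p:ℤ) := by exact_mod_cast hp
    have hjle : |(j:ℝ)| ≤ (q:ℝ) * (k:ℝ)^2 := by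
      have hm' : |m| = (p:ℤ) * |j| := by
        rw [hm, abs_mul, abs_of_nonneg (by positivity : (0:ℤ) ≤ (p:ℤ))]
      have hn' : |n| = (q:ℤ) * k^2 := by
        rw [hn, abs_mul, abs_of_nonneg (by positivity : (0:ℤ) ≤ (q:ℤ)),
          abs_of_nonneg (sq_nonneg k)]
      have hj' : |j| ≤ (p:ℤ) * |j| := le_mul_of_one_le_left (abs_nonneg j) hp1
      have hZ : |j| ≤ (q:ℤ) * k^2 := by linarith
      have hR : ((|j| : ℤ) : ℝ) ≤ (((q:ℤ) * k^2 : ℤ) : ℝ) := by exact_mod_cast hZ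
      push_cast at hR
      linarith
    rw [hDa a, hmn]
    simp only [sub_self, Int.cast_zero, zero_div, zero_add]
    rw [habsA]
    have hce2 : c * ε * ((q:ℝ) + 1) * (k:ℝ)^2 = ε * (k:ℝ)^2 := by
      linear_combination ((k:ℝ)^2 * ε) * hc1
    linarith [hce2, mul_le_mul_of_nonneg_left hjle (le_of_lt (mul_pos hcpos hε)),
      mul_le_mul_of_nonneg_right (le_of_lt hAlb) (sq_nonneg (k:ℝ))]
  · -- nondegenerate case
    have hkey := key_int m n hmn
    have hkeyR : |(j:ℝ)| + (q:ℝ) * (k:ℝ)^2 ≤ |((m^2 - n^2 : ℤ):ℝ)| := by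
      have hm' : |m| = (p:ℤ) * |j| := by
        rw [hm, abs_mul, abs_of_nonneg (by positivity : (0:ℤ) ≤ (p:ℤ))]
      have hn' : |n| = (q:ℤ) * k^2 := by
        rw [hn, abs_mul, abs_of_nonneg (by positivity : (0:ℤ) ≤ (q:ℤ)),
          abs_of_nonneg (sq_nonneg k)]
      have hp1 : (1:ℤ) ≤ (p:ℤ) := by exact_mod_cast hp
      have hj' : |j| ≤ (p:ℤ) * |j| := le_mul_of_one_le_left (abs_nonneg j) hp1
      have hZ : |j| + (q:ℤ) * k^2 ≤ |m^2 - n^2| := by linarith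
      have hR : ((|j| + (q:ℤ) * k^2 : ℤ) : ℝ) ≤ ((|m^2 - n^2| : ℤ) : ℝ) := by
        exact_mod_cast hZ
      push_cast at hR ⊢
      linarith
    have hlow : |((m^2-n^2:ℤ):ℝ)| / (q:ℝ)^2 - a⁻¹^2 * (k:ℝ)^2 ≤ |lam p q a j k l| := by
      rw [hDa a]
      have h4 : |((m^2-n^2:ℤ):ℝ) / (q:ℝ)^2| - |(-1:ℝ)^(l:ℕ) * a⁻¹^2 * (k:ℝ)^2| ≤
          |((m^2-n^2:ℤ):ℝ) / (q:ℝ)^2 + (-1:ℝ)^(l:ℕ) * a⁻¹^2 * (k:ℝ)^2| := by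
        have := abs_sub_abs_le_abs_sub (((m^2-n^2:ℤ):ℝ) / (q:ℝ)^2)
          (-((-1:ℝ)^(l:ℕ) * a⁻¹^2 * (k:ℝ)^2))
        simpa [sub_neg_eq_add] using this
      have h3 : |((m^2-n^2:ℤ):ℝ) / (q:ℝ)^2| = |((m^2-n^2:ℤ):ℝ)| / (q:ℝ)^2 := by
        rw [abs_div, abs_of_pos (by positivity : (0:ℝ) < (q:ℝ)^2)]
      rw [h3, habsA] at h4
      exact h4
    refine le_trans ?_ hlow
    rw [le_sub_iff_add_le, le_div_iff₀ (by positivity : (0:ℝ) < (q:ℝ)^2)]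
    have hAub' : a⁻¹^2 * (q:ℝ) ≤ 1 - ε * (q:ℝ) := by
      have hmul := mul_le_mul_of_nonneg_right hAub hqpos.le
      have he : (1/(q:ℝ) - ε) * (q:ℝ) = 1 - ε * (q:ℝ) := by field_simp
      linarith [hmul, he]
    nlinarith [hkeyR,
      mul_le_mul_of_nonneg_left hAub' (mul_nonneg (sq_nonneg (k:ℝ)) hqpos.le),
      mul_le_mul_of_nonneg_right hcq2 (abs_nonneg (j:ℝ)),
      mul_le_mul_of_nonneg_right hcε (mul_nonneg (sq_nonneg (k:ℝ)) (sq_nonneg (q:ℝ)))]
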